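/- Let δ ≥ 0, T > 0 and let φ : [0,T] → ℝ be continuous. Then ∫_0^{T} φ(t)·( ∫_0^{t} e^{−δ(t−s)}·φ(s) ds ) dt ≥ 0. -/

import Mathlib

open Set intervalIntegral

/-- Auxiliary version for globally continuous `ψ`. -/
lemma exp_kernel_positive_aux
    (δ T : ℝ) (hδ : 0 ≤ δ) (hT : 0 ≤ T)
    (ψ : ℝ → ℝ) (hψ : Continuous ψ) :
    0 ≤ ∫ t in (0:ℝ)..T, ψ t * ∫ s in (0:ℝ)..t, Real.exp (-δ * (t - s)) * ψ s := by
  set g : ℝ → ℝ := fun s => Real.exp (δ * s) * ψ s with hg_def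
  have hg : Continuous g := (Real.continuous_exp.comp (continuous_const.mul continuous_id)).mul hψ
  set u : ℝ → ℝ := fun t => ∫ s in (0:ℝ)..t, g s with hu_def
  have hu : ∀ x : ℝ, HasDerivAt u (g x) x := fun x =>
    integral_hasDerivAt_right (hg.intervalIntegrable 0 x)
      (hg.stronglyMeasurableAtFilter _ _) hg.continuousAt
  have hu_cont : Continuous u := by
    refine continuous_iff_continuousAt.2 fun x => (hu x).continuousAt
  set w : ℝ → ℝ := fun s => Real.exp (-(2 * δ) * s) * u s ^ 2 with hw_def
  have hw : Continuous w :=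
    ((Real.continuous_exp.comp (continuous_const.mul continuous_id))).mul (hu_cont.pow 2)
  set W : ℝ → ℝ := fun t => ∫ s in (0:ℝ)..t, w s with hW_def
  have hW : ∀ x : ℝ, HasDerivAt W (w x) x := fun x =>
    integral_hasDerivAt_right (hw.intervalIntegrable 0 x)
      (hw.stronglyMeasurableAtFilter _ _) hw.continuousAt
  set F : ℝ → ℝ := fun t => Real.exp (-(2 * δ) * t) * u t ^ 2 / 2 + δ * W t with hF_def
  have hE : ∀ x : ℝ, HasDerivAt (fun t => Real.exp (-(2 * δ) * t))
      (Real.exp (-(2 * δ) * x) * (-(2 * δ))) x := by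
    intro x
    simpa using ((hasDerivAt_id x).const_mul (-(2 * δ))).exp
  have hF : ∀ x : ℝ, HasDerivAt F (Real.exp (-(2 * δ) * x) * (g x * u x)) x := by
    intro x
    have h2 : HasDerivAt (fun t => u t ^ 2) (2 * u x * g x) x := by
      simpa using (hu x).fun_pow 2
    have := (((hE x).mul h2).div_const 2).add ((hW x).const_mul δ)
    refine this.congr_deriv ?_
    simp only [hw_def]
    ring
  have hcontI : Continuous fun t => Real.exp (-(2 * δ) * t) * (g t * u t) :=
    (Real.continuous_exp.comp (continuous_const.mul continuous_id)).mul (hg.mul hu_cont)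
  have key : (∫ t in (0:ℝ)..T, Real.exp (-(2 * δ) * t) * (g t * u t)) = F T - F 0 :=
    integral_eq_sub_of_hasDerivAt (fun x _ => hF x) (hcontI.intervalIntegrable 0 T)
  have hrw : ∀ t : ℝ, ψ t * ∫ s in (0:ℝ)..t, Real.exp (-δ * (t - s)) * ψ s
      = Real.exp (-(2 * δ) * t) * (g t * u t) := by
    intro t
    have hin : ∀ s : ℝ, Real.exp (-δ * (t - s)) * ψ s = Real.exp (-δ * t) * g s := by
      intro s
      rw [hg_def]
      simp only
      rw [← mul_assoc, ← Real.exp_add]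
      ring_nf
    simp_rw [hin, intervalIntegral.integral_const_mul]
    have he : Real.exp (-(2 * δ) * t) * Real.exp (δ * t) = Real.exp (-δ * t) := by
      rw [← Real.exp_add]; ring_nf
    simp only [hg_def, hu_def]
    rw [show Real.exp (-δ * t) = Real.exp (-(2 * δ) * t) * Real.exp (δ * t) from by
      rw [← Real.exp_add]; ring_nf]
    ring
  simp_rw [hrw, key]
  have hF0 : F 0 = 0 := by
    simp [hF_def, hu_def, hW_def]
  have hWT : 0 ≤ W T := by
    rw [hW_def]
    exact intervalIntegral.integral_nonneg hT fun s _ => by positivity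
  have hFT : 0 ≤ F T := by
    have : 0 ≤ Real.exp (-(2 * δ) * T) * u T ^ 2 / 2 := by positivity
    have h2 : 0 ≤ δ * W T := mul_nonneg hδ hWT
    simp only [hF_def]; linarith
  linarith

/-- Positivity of the memory kernel `exp (−δ t)`:
`∫_0^T φ(t) (∫_0^t exp (−δ(t−s)) φ(s) ds) dt ≥ 0`. -/
theorem exp_kernel_positive
    (δ T : ℝ) (hδ : 0 ≤ δ) (hT : 0 < T)
    (φ : ℝ → ℝ) (hφ : ContinuousOn φ (Set.Icc 0 T)) :
    0 ≤ ∫ t in (0:ℝ)..T, φ t * ∫ s in (0:ℝ)..t, Real.exp (-δ * (t - s)) * φ s := by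
  obtain ⟨ψ, hψ⟩ := ContinuousMap.exists_restrict_eq (isClosed_Icc (a := (0:ℝ)) (b := T))
    ⟨_, hφ.restrict⟩
  have hψφ : ∀ x ∈ Icc (0:ℝ) T, ψ x = φ x := by
    intro x hx
    have := congrFun (congrArg DFunLike.coe hψ) ⟨x, hx⟩
    simpa using this
  have hmain := exp_kernel_positive_aux δ T hδ hT.le ψ ψ.continuous
  have heq : (∫ t in (0:ℝ)..T, (ψ : ℝ → ℝ) t * ∫ s in (0:ℝ)..t, Real.exp (-δ * (t - s)) * ψ s)
      = ∫ t in (0:ℝ)..T, φ t * ∫ s in (0:ℝ)..t, Real.exp (-δ * (t - s)) * φ s := by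
    apply intervalIntegral.integral_congr
    intro t ht
    rw [uIcc_of_le hT.le] at ht
    have h1 : (ψ : ℝ → ℝ) t = φ t := hψφ t ht
    have h2 : (∫ s in (0:ℝ)..t, Real.exp (-δ * (t - s)) * ψ s)
        = ∫ s in (0:ℝ)..t, Real.exp (-δ * (t - s)) * φ s := by
      apply intervalIntegral.integral_congr
      intro s hs
      rw [uIcc_of_le ht.1] at hs
      simp only [hψφ s ⟨hs.1, hs.2.trans ht.2⟩]
    simp only [h1, h2]
  rw [← heq]
  exact hmain
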